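/- Let p be prime and n ≥ 1. Define the discrete Radon transform of f : (Z/pZ)^n → C along the line through a with direction b ≠ 0 by (Rf)(a;b) = (1/p) * sum_{j=0}^{p-1} f(a + j·b), and the conjugate transform (R*g)(a) = (1/(p^n - 1)) * sum_{b ≠ 0} g(a;b). Then for every nonzero y in (Z/pZ)^n, the character f_y(x) = exp(2*pi*i*<x,y>/p) satisfies (R*R f_y) = ((p^{n-1}-1)/(p^n-1)) · f_y, and for y = 0 it satisfies (R*R f_0) = f_0. -/

import Mathlib

/-- The discrete Radon transform: average of `f` along the arithmetic
progression through `a` with direction `b`. -/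
noncomputable def discreteRadon (p n : ℕ) (f : (Fin n → ZMod p) → ℂ)
    (a b : Fin n → ZMod p) : ℂ :=
  (1 / (p : ℂ)) * ∑ j ∈ Finset.range p, f (a + j • b)

/-- The conjugate discrete Radon transform: average over all nonzero
directions `b`. -/
noncomputable def discreteRadonConj (p n : ℕ) [NeZero p]
    (g : (Fin n → ZMod p) → (Fin n → ZMod p) → ℂ) (a : Fin n → ZMod p) : ℂ :=
  (1 / ((p : ℂ) ^ n - 1)) * ∑ b ∈ Finset.univ.filter (fun b : Fin n → ZMod p => b ≠ 0), g a b

/-- The character `f_y`. -/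
noncomputable def discreteCharacter (p n : ℕ) (y : Fin n → ZMod p)
    (x : Fin n → ZMod p) : ℂ :=
  Complex.exp (2 * Real.pi * Complex.I * ((∑ i, x i * y i).val : ℂ) / p)


open Finset

lemma card_ker_filter (p n : ℕ) [Fact p.Prime] (y : Fin n → ZMod p) (hy : y ≠ 0) :
    (Finset.univ.filter (fun b : Fin n → ZMod p => ∑ i, b i * y i = 0)).card = p ^ (n - 1) := by
  classical
  let φ : (Fin n → ZMod p) →ₗ[ZMod p] ZMod p :=
    { toFun := fun b => ∑ i, b i * y i
      map_add' := by intro a b; simp [add_mul, Finset.sum_add_distrib]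
      map_smul' := by intro c b; simp [Finset.mul_sum, mul_assoc] }
  obtain ⟨i₀, hi₀⟩ := Function.ne_iff.1 hy
  have hsurj : Function.Surjective φ := by
    intro c
    refine ⟨Pi.single i₀ (c * (y i₀)⁻¹), ?_⟩
    simp only [φ, LinearMap.coe_mk, AddHom.coe_mk]
    rw [Finset.sum_eq_single i₀]
    · rw [Pi.single_eq_same, mul_assoc, inv_mul_cancel₀ hi₀, mul_one]
    · intro i _ hi; rw [Pi.single_eq_of_ne hi, zero_mul]
    · simp
  have hrank : Module.finrank (ZMod p) (LinearMap.ker φ) = n - 1 := by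
    have h1 := LinearMap.finrank_range_add_finrank_ker φ
    rw [LinearMap.range_eq_top.2 hsurj, finrank_top, Module.finrank_self,
      Module.finrank_pi, Fintype.card_fin] at h1
    omega
  have hcard : Fintype.card (LinearMap.ker φ) = p ^ (n - 1) := by
    rw [Module.card_eq_pow_finrank (K := ZMod p), ZMod.card, hrank]
  rw [← Fintype.card_subtype]
  rw [← hcard]
  exact Fintype.card_congr (Equiv.subtypeEquivRight (by intro b; simp [φ, LinearMap.mem_ker]))

lemma radon_char (p n : ℕ) [Fact p.Prime] (y : Fin n → ZMod p) (a b : Fin n → ZMod p) :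
    discreteRadon p n (discreteCharacter p n y) a b
      = (if (∑ i, b i * y i) = 0 then 1 else 0) * discreteCharacter p n y a := by
  have hp : p.Prime := Fact.out
  have hp0 : (p : ℂ) ≠ 0 := Nat.cast_ne_zero.2 hp.ne_zero
  set ζ : ℂ := Complex.exp (2 * Real.pi * Complex.I / p) with hζdef
  have hζ : IsPrimitiveRoot ζ p := Complex.isPrimitiveRoot_exp p hp.ne_zero
  have hζp : ζ ^ p = 1 := hζ.pow_eq_one
  have hpow : ∀ k : ℕ, ζ ^ k = ζ ^ (k % p) := by
    intro k
    conv_lhs => rw [← Nat.div_add_mod k p]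
    rw [pow_add, pow_mul, hζp, one_pow, one_mul]
  have hchar : ∀ x : Fin n → ZMod p, discreteCharacter p n y x = ζ ^ (∑ i, x i * y i).val := by
    intro x
    rw [discreteCharacter, hζdef, ← Complex.exp_nat_mul]
    ring_nf
  have hadd : ∀ c d : ZMod p, ζ ^ (c + d).val = ζ ^ c.val * ζ ^ d.val := by
    intro c d
    rw [← pow_add, hpow (c.val + d.val), ZMod.val_add]
  have hnsmul : ∀ (j : ℕ) (c : ZMod p), ζ ^ ((j • c : ZMod p)).val = (ζ ^ c.val) ^ j := by
    intro j c
    induction j with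
    | zero => simp
    | succ k ih => rw [succ_nsmul, hadd, ih, pow_succ]
  set Sa := ∑ i, a i * y i with hSa
  set Sb := ∑ i, b i * y i with hSb
  have hsum : ∀ j : ℕ, (∑ i, (a + j • b) i * y i) = Sa + j • Sb := by
    intro j
    simp only [Pi.add_apply, Pi.smul_apply, add_mul, Finset.sum_add_distrib, hSa, hSb,
      smul_mul_assoc, ← Finset.smul_sum]
  rw [discreteRadon]
  have : ∀ j ∈ Finset.range p, discreteCharacter p n y (a + j • b)
      = ζ ^ Sa.val * (ζ ^ Sb.val) ^ j := by
    intro j _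
    rw [hchar, hsum, hadd, hnsmul]
  rw [Finset.sum_congr rfl this, ← Finset.mul_sum, hchar a]
  by_cases hb : Sb = 0
  · rw [if_pos hb, hb]
    simp only [ZMod.val_zero, pow_zero, one_pow, Finset.sum_const, Finset.card_range,
      nsmul_eq_mul, mul_one]
    field_simp
    rfl
  · rw [if_neg hb]
    have hv1 : 0 < Sb.val := by
      rcases Nat.pos_of_ne_zero (fun h => hb (by rwa [← ZMod.val_eq_zero])) with h
      exact h
    have hne1 : ζ ^ Sb.val ≠ 1 := hζ.pow_ne_one_of_pos_of_lt hv1.ne' (ZMod.val_lt Sb)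
    have hgeo : ∑ j ∈ Finset.range p, (ζ ^ Sb.val) ^ j = 0 := by
      rw [geom_sum_eq hne1, ← pow_mul, mul_comm, pow_mul, hζp, one_pow, sub_self, zero_div]
    rw [hgeo]
    ring

theorem discreteRadon_eigenvalues (p n : ℕ) [Fact p.Prime] (hn : 1 ≤ n)
    (y : Fin n → ZMod p) :
    (discreteRadonConj p n (fun a b => discreteRadon p n (discreteCharacter p n y) a b))
      = (if y ≠ 0 then (((p : ℂ) ^ (n - 1) - 1) / ((p : ℂ) ^ n - 1)) else 1)
        • discreteCharacter p n y := by
  classical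
  have hp : p.Prime := Fact.out
  have hne : ((p : ℂ) ^ n - 1) ≠ 0 := by
    rw [sub_ne_zero]
    intro h
    have : ((p ^ n : ℕ) : ℂ) = ((1 : ℕ) : ℂ) := by push_cast; simpa using h
    have := Nat.cast_injective this
    exact absurd this (Nat.ne_of_gt (Nat.one_lt_pow (by omega) hp.one_lt))
  funext a
  rw [discreteRadonConj]
  have hrw : ∀ b ∈ Finset.univ.filter (fun b : Fin n → ZMod p => b ≠ 0),
      discreteRadon p n (discreteCharacter p n y) a b
        = (if (∑ i, b i * y i) = 0 then 1 else 0) * discreteCharacter p n y a :=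
    fun b _ => radon_char p n y a b
  rw [Finset.sum_congr rfl hrw, ← Finset.sum_mul, Finset.sum_boole, Finset.filter_filter]
  by_cases hy : y = 0
  · subst hy
    simp only [Pi.zero_apply, mul_zero, Finset.sum_const_zero, eq_self_iff_true, and_true]
    have hcard : (Finset.univ.filter (fun b : Fin n → ZMod p => b ≠ 0)).card = p ^ n - 1 := by
      rw [Finset.filter_ne', Finset.card_erase_of_mem (Finset.mem_univ _), Finset.card_univ]
      simp [Fintype.card_fun, ZMod.card]
    rw [hcard, if_neg (by simp)]
    rw [Nat.cast_sub (Nat.one_le_iff_ne_zero.2 (pow_ne_zero n hp.ne_zero))]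
    push_cast
    rw [one_smul]
    field_simp
  · rw [if_pos hy]
    have hcard : (Finset.univ.filter (fun b : Fin n → ZMod p =>
        b ≠ 0 ∧ (∑ i, b i * y i) = 0)).card = p ^ (n - 1) - 1 := by
      have : (Finset.univ.filter (fun b : Fin n → ZMod p => b ≠ 0 ∧ (∑ i, b i * y i) = 0))
          = (Finset.univ.filter (fun b : Fin n → ZMod p => (∑ i, b i * y i) = 0)).erase 0 := by
        ext b
        simp only [Finset.mem_erase, Finset.mem_filter, Finset.mem_univ, true_and]
      rw [this, Finset.card_erase_of_mem (by simp), card_ker_filter p n y hy]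
    rw [hcard, Nat.cast_sub (Nat.one_le_iff_ne_zero.2 (pow_ne_zero _ hp.ne_zero))]
    push_cast
    rw [Pi.smul_apply, smul_eq_mul]
    field_simp
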